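/- Fix ε > 0 and set N = n^{1-ε}. Let Q_n be a random symmetric n×n matrix whose upper-diagonal entries are i.i.d. Bernoulli random variables taking values 0 and 1 with probability 1/2. Then the probability that Q_n is nonsingular and imperfect (i.e., some row of Q_n is bad) is O((2/3)^n), with implied constant depending only on ε. -/
import Mathlib


open scoped Classical

/-- The set of upper-diagonal index pairs `(i, j)` with `i ≤ j` of an `n × n` matrix. -/
abbrev UpIdx (n : ℕ) := {p : Fin n × Fin n // p.1 ≤ p.2}

/-- The random symmetric Bernoulli matrix determined by an assignment `ω` of `{0,1}` values
(`Bool`) to the upper-diagonal entries. -/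
noncomputable def bmat (n : ℕ) (ω : UpIdx n → Bool) : Matrix (Fin n) (Fin n) ℝ :=
  Matrix.of fun i j => if ω ⟨(min i j, max i j), min_le_max⟩ then 1 else 0

/-- The probability of an event under the uniform measure on a finite type. -/
noncomputable def unifProb {α : Type*} [Fintype α] (P : α → Prop) : ℝ :=
  ((Finset.univ.filter P).card : ℝ) / (Fintype.card α : ℝ)

/-- Row `i` of `M` is good (w.r.t. the parameter `N`) if deleting it yields an `(n-1) × n`
matrix whose `n` columns admit a nontrivial vanishing linear combination with at least `N`
nonzero coefficients. -/
def GoodRow {n : ℕ} (M : Matrix (Fin n) (Fin n) ℝ) (N : ℝ) (i : Fin n) : Prop :=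
  ∃ c : Fin n → ℝ, c ≠ 0 ∧ (∀ k, k ≠ i → (∑ j, c j * M k j) = 0) ∧
    N ≤ ((Finset.univ.filter fun j => c j ≠ 0).card : ℝ)

namespace NSI

variable {n : ℕ}

def upidx (k j : Fin n) : UpIdx n := ⟨(min k j, max k j), min_le_max⟩

noncomputable def ent (ω : UpIdx n → Bool) (k j : Fin n) : ℝ := if ω (upidx k j) then 1 else 0

lemma bmat_eq (ω : UpIdx n → Bool) (k j : Fin n) : bmat n ω k j = ent ω k j := rfl

lemma upidx_eq_iff (a b c d : Fin n) :
    upidx a b = upidx c d ↔ (a = c ∧ b = d) ∨ (a = d ∧ b = c) := by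
  unfold upidx
  rw [Subtype.mk_eq_mk, Prod.ext_iff]
  constructor
  · rintro ⟨h1, h2⟩
    rcases le_total a b with hab | hab <;> rcases le_total c d with hcd | hcd <;>
      simp [min_eq_left, min_eq_right, max_eq_left, max_eq_right, hab, hcd] at h1 h2 <;>
      tauto
  · rintro (⟨rfl, rfl⟩ | ⟨rfl, rfl⟩)
    · exact ⟨rfl, rfl⟩
    · exact ⟨min_comm _ _, max_comm _ _⟩

noncomputable def restr (ω : UpIdx n → Bool) (S D : Finset (Fin n)) : Fin n → Fin n → ℝ :=
  fun k j => if k ∈ D ∧ j ∈ S then ent ω k j else 0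

def KerProp (S : Finset (Fin n)) (r : Fin n → Fin n → ℝ) (c : Fin n → ℝ) : Prop :=
  c ≠ 0 ∧ (∀ j ∉ S, c j = 0) ∧ ∀ k, ∑ j, c j * r k j = 0

noncomputable def cvec (S : Finset (Fin n)) (r : Fin n → Fin n → ℝ) : Fin n → ℝ :=
  if h : ∃ c, KerProp S r c then h.choose else 0

lemma cvec_spec {S : Finset (Fin n)} {r : Fin n → Fin n → ℝ} (h : ∃ c, KerProp S r c) :
    KerProp S r (cvec S r) := by
  rw [cvec, dif_pos h]; exact h.choose_spec

lemma cvec_spec' {S : Finset (Fin n)} {r : Fin n → Fin n → ℝ} (h : cvec S r ≠ 0) :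
    KerProp S r (cvec S r) := by
  by_cases h' : ∃ c, KerProp S r c
  · exact cvec_spec h'
  · rw [cvec, dif_neg h'] at h; exact absurd rfl h

noncomputable def j0 (hn : 0 < n) (c : Fin n → ℝ) : Fin n :=
  if h : ∃ j, c j ≠ 0 then h.choose else ⟨0, hn⟩

lemma j0_spec (hn : 0 < n) {c : Fin n → ℝ} (h : c ≠ 0) : c (j0 hn c) ≠ 0 := by
  have h' : ∃ j, c j ≠ 0 := Function.ne_iff.mp h
  rw [j0, dif_pos h']; exact h'.choose_spec

noncomputable def Ev (i : Fin n) (S D : Finset (Fin n)) : Finset (UpIdx n → Bool) :=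
  Finset.univ.filter fun ω =>
    cvec S (restr ω S D) ≠ 0 ∧
    ∀ k, k ∉ insert i S ∪ D → ∑ j, cvec S (restr ω S D) j * ent ω k j = 0

noncomputable def flip (j : Fin n) (b : Finset (Fin n)) (ω : UpIdx n → Bool) : UpIdx n → Bool :=
  fun p => if ∃ k ∈ b, p = upidx k j then !ω p else ω p

lemma ent_flip_eq {j : Fin n} {b : Finset (Fin n)} {ω : UpIdx n → Bool} {k l : Fin n}
    (h : ∀ k' ∈ b, upidx k l ≠ upidx k' j) : ent (flip j b ω) k l = ent ω k l := by
  have hne : ¬ ∃ k' ∈ b, upidx k l = upidx k' j := by push_neg; exact h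
  unfold ent flip
  rw [if_neg hne]

lemma restr_flip {i : Fin n} {S D : Finset (Fin n)} {j : Fin n} {b : Finset (Fin n)}
    {ω : UpIdx n → Bool} (hb : b ⊆ Finset.univ \ (insert i S ∪ D)) :
    restr (flip j b ω) S D = restr ω S D := by
  funext k l
  unfold restr
  by_cases hkl : k ∈ D ∧ l ∈ S
  · rw [if_pos hkl, if_pos hkl]
    refine ent_flip_eq fun k' hk' heq => ?_
    have hk'c := Finset.mem_sdiff.mp (hb hk')
    rcases (upidx_eq_iff _ _ _ _).mp heq with ⟨h1, _⟩ | ⟨_, h2⟩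
    · exact hk'c.2 (Finset.mem_union_right _ (h1 ▸ hkl.1))
    · exact hk'c.2 (Finset.mem_union_left _ (Finset.mem_insert_of_mem (h2 ▸ hkl.2)))
  · rw [if_neg hkl, if_neg hkl]

lemma dot_flip_mem {i : Fin n} {S : Finset (Fin n)} {j : Fin n} {b : Finset (Fin n)}
    {D : Finset (Fin n)}
    {ω : UpIdx n → Bool} (hb : b ⊆ Finset.univ \ (insert i S ∪ D)) (hj : j ∈ S)
    {k : Fin n} (hk : k ∈ b) (c : Fin n → ℝ) :
    ∑ l, c l * ent (flip j b ω) k l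
      = (∑ l, c l * ent ω k l) + c j * (1 - 2 * ent ω k j) := by
  have hkS : k ∉ S := fun h => (Finset.mem_sdiff.mp (hb hk)).2
    (Finset.mem_union_left _ (Finset.mem_insert_of_mem h))
  have hkj : k ≠ j := fun h => hkS (h ▸ hj)
  have hmain : ∀ l, l ≠ j → ent (flip j b ω) k l = ent ω k l := by
    intro l hl
    refine ent_flip_eq fun k' hk' heq => ?_
    have hk'S : k' ∉ S := fun h => (Finset.mem_sdiff.mp (hb hk')).2
      (Finset.mem_union_left _ (Finset.mem_insert_of_mem h))
    rcases (upidx_eq_iff _ _ _ _).mp heq with ⟨_, h2⟩ | ⟨h1, _⟩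
    · exact hl h2
    · exact hkS (h1 ▸ hj)  -- k = j ∈ S contradiction
  have hflipj : ent (flip j b ω) k j = 1 - ent ω k j := by
    have hcond : ∃ k' ∈ b, upidx k j = upidx k' j := ⟨k, hk, rfl⟩
    unfold ent flip
    simp only [hcond, if_true]
    cases h : ω (upidx k j) <;> simp
  rw [← Finset.sum_erase_add _ _ (Finset.mem_univ j),
      ← Finset.sum_erase_add _ (fun l => c l * ent ω k l) (Finset.mem_univ j)]
  rw [Finset.sum_congr rfl (fun l hl => by
    rw [hmain l (Finset.ne_of_mem_erase hl)])]
  rw [hflipj]; ring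

lemma dot_flip_notMem {i : Fin n} {S : Finset (Fin n)} {j : Fin n} {b : Finset (Fin n)}
    {D : Finset (Fin n)}
    {ω : UpIdx n → Bool} (hb : b ⊆ Finset.univ \ (insert i S ∪ D)) (hj : j ∈ S)
    {k : Fin n} (hk : k ∉ b) (hkS : k ∉ S) (c : Fin n → ℝ) :
    ∑ l, c l * ent (flip j b ω) k l = ∑ l, c l * ent ω k l := by
  refine Finset.sum_congr rfl fun l _ => ?_
  rw [ent_flip_eq]
  intro k' hk' heq
  rcases (upidx_eq_iff _ _ _ _).mp heq with ⟨h1, _⟩ | ⟨h1, _⟩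
  · exact hk (h1 ▸ hk')
  · exact hkS (h1 ▸ hj)

lemma mem_Ev_iff {i : Fin n} {S D : Finset (Fin n)} {ω : UpIdx n → Bool} :
    ω ∈ Ev i S D ↔ cvec S (restr ω S D) ≠ 0 ∧
      ∀ k, k ∉ insert i S ∪ D → ∑ j, cvec S (restr ω S D) j * ent ω k j = 0 := by
  rw [Ev, Finset.mem_filter]; simp

lemma counting (hn : 0 < n) (i : Fin n) (S D : Finset (Fin n)) :
    (Ev i S D).card * 2 ^ (n - (insert i S ∪ D).card) ≤ Fintype.card (UpIdx n → Bool) := by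
  set T : Finset (Fin n) := insert i S ∪ D with hT
  have hBcard : ((Finset.univ \ T).powerset.card) = 2 ^ (n - T.card) := by
    rw [Finset.card_powerset, Finset.card_sdiff_of_subset (Finset.subset_univ T), Finset.card_univ,
      Fintype.card_fin]
  have key : ∀ ω ∈ Ev i S D, ∀ b ∈ (Finset.univ \ T).powerset, ∀ k,
      k ∈ b ↔ (k ∉ T ∧
        ∑ l, cvec S (restr ω S D) l * ent (flip (j0 hn (cvec S (restr ω S D))) b ω) k l ≠ 0) := by
    intro ω hω b hb k
    obtain ⟨hc, hrows⟩ := mem_Ev_iff.mp hω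
    set c := cvec S (restr ω S D) with hcdef
    set j := j0 hn c with hjdef
    have hcj : c j ≠ 0 := j0_spec hn hc
    have hjS : j ∈ S := by
      by_contra hjs
      exact hcj ((cvec_spec' hc).2.1 j hjs)
    have hb' : b ⊆ Finset.univ \ T := Finset.mem_powerset.mp hb
    constructor
    · intro hk
      have hkT : k ∉ T := (Finset.mem_sdiff.mp (hb' hk)).2
      refine ⟨hkT, ?_⟩
      rw [dot_flip_mem hb' hjS hk c, hrows k hkT, zero_add]
      refine mul_ne_zero hcj ?_
      unfold ent
      split <;> norm_num
    · rintro ⟨hkT, hne⟩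
      by_contra hk
      have hkS : k ∉ S := fun h => hkT (Finset.mem_union_left _ (Finset.mem_insert_of_mem h))
      rw [dot_flip_notMem hb' hjS hk hkS c, hrows k hkT] at hne
      exact hne rfl
  have hinj : Set.InjOn
      (fun q : (UpIdx n → Bool) × Finset (Fin n) => flip (j0 hn (cvec S (restr q.1 S D))) q.2 q.1)
      ((Ev i S D) ×ˢ ((Finset.univ \ T).powerset) : Finset _) := by
    rintro ⟨ω, b⟩ hq ⟨ω', b'⟩ hq' heq
    simp only [Finset.coe_product, Set.mem_prod, Finset.mem_coe] at hq hq'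
    obtain ⟨hω, hb⟩ := hq
    obtain ⟨hω', hb'⟩ := hq'
    simp only at heq
    have hbs : b ⊆ Finset.univ \ T := Finset.mem_powerset.mp hb
    have hbs' : b' ⊆ Finset.univ \ T := Finset.mem_powerset.mp hb'
    -- restricted data agree
    have hr : restr ω' S D = restr ω S D := by
      have h1 : restr (flip (j0 hn (cvec S (restr ω S D))) b ω) S D = restr ω S D :=
        restr_flip (i := i) hbs
      have h2 : restr (flip (j0 hn (cvec S (restr ω' S D))) b' ω') S D = restr ω' S D :=
        restr_flip (i := i) hbs'
      rw [← h1, ← h2, heq]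
    have hb_eq : b = b' := by
      ext k
      rw [key ω hω b hb k, key ω' hω' b' hb' k, heq, hr]
    have hτ := heq
    rw [hr, ← hb_eq] at hτ
    -- now τ := flip j b ω = flip j b ω' with identical j and b
    have hω_eq : ω = ω' := by
      funext p
      have := congrFun hτ p
      unfold flip at this
      split at this
      · exact Bool.not_inj this
      · exact this
    exact Prod.ext hω_eq hb_eq
  calc (Ev i S D).card * 2 ^ (n - T.card)
      = ((Ev i S D) ×ˢ ((Finset.univ \ T).powerset)).card := by
        rw [Finset.card_product, hBcard]
    _ ≤ (Finset.univ : Finset (UpIdx n → Bool)).card :=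
        Finset.card_le_card_of_injOn _ (fun _ _ => Finset.mem_univ _) hinj
    _ = Fintype.card (UpIdx n → Bool) := Finset.card_univ

lemma exists_kernel (M : Matrix (Fin n) (Fin n) ℝ) (i : Fin n) :
    ∃ c : Fin n → ℝ, c ≠ 0 ∧ ∀ k, k ≠ i → ∑ j, c j * M k j = 0 := by
  have hdet : (M.updateRow i 0).det = 0 :=
    Matrix.det_eq_zero_of_row_eq_zero i (fun j => by simp)
  obtain ⟨v, hv0, hv⟩ := (Matrix.exists_mulVec_eq_zero_iff).mpr hdet
  refine ⟨v, hv0, fun k hk => ?_⟩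
  have hk0 := congrFun hv k
  simp only [Matrix.mulVec, dotProduct, Pi.zero_apply] at hk0
  calc ∑ j, v j * M k j = ∑ j, (M.updateRow i 0) k j * v j := by
        refine Finset.sum_congr rfl fun j _ => ?_
        rw [Matrix.updateRow_ne hk, mul_comm]
    _ = 0 := hk0

lemma reduction {ω : UpIdx n → Bool} {N : ℝ} {i : Fin n}
    (hbad : ¬ GoodRow (bmat n ω) N i) :
    ∃ S D : Finset (Fin n), (S.card : ℝ) < N ∧ D.card ≤ S.card ∧ ω ∈ Ev i S D := by
  obtain ⟨c, hc0, hrows⟩ := exists_kernel (bmat n ω) i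
  set S : Finset (Fin n) := Finset.univ.filter (fun j => c j ≠ 0) with hS
  have hsupp : ∀ j ∉ S, c j = 0 := by
    intro j hj
    by_contra h
    exact hj (by simp [hS, h])
  have hScard : (S.card : ℝ) < N := by
    by_contra hle
    push_neg at hle
    exact hbad ⟨c, hc0, hrows, hle⟩
  set K : Finset (Fin n) := Finset.univ \ insert i S with hK
  set ρ : Fin n → (↥S → ℝ) := fun k => fun j => ent ω k (j : Fin n) with hρ
  obtain ⟨t, hts, hspan, hli⟩ := exists_linearIndependent ℝ (ρ '' (K : Set (Fin n)))
  have htfin : t.Finite := ((K.finite_toSet.image ρ)).subset hts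
  haveI := htfin.fintype
  have htcard : Fintype.card ↥t ≤ S.card := by
    have h1 := hli.fintype_card_le_finrank
    rwa [Module.finrank_fintype_fun_eq_card, Fintype.card_coe] at h1
  have hfex : ∀ v ∈ t, ∃ k ∈ K, ρ k = v := by
    intro v hv
    obtain ⟨k, hk, hkv⟩ := hts hv
    exact ⟨k, hk, hkv⟩
  set f : (↥S → ℝ) → Fin n := fun v => if h : ∃ k ∈ K, ρ k = v then h.choose else i with hf
  have hfspec : ∀ v ∈ t, f v ∈ K ∧ ρ (f v) = v := by
    intro v hv
    have hex := hfex v hv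
    simp only [hf, dif_pos hex]
    exact ⟨hex.choose_spec.1, hex.choose_spec.2⟩
  set D : Finset (Fin n) := htfin.toFinset.image f with hD
  have hDK : D ⊆ K := by
    intro k hk
    rw [hD, Finset.mem_image] at hk
    obtain ⟨v, hv, hvk⟩ := hk
    rw [Set.Finite.mem_toFinset] at hv
    exact hvk ▸ (hfspec v hv).1
  have hDcard : D.card ≤ S.card := by
    calc D.card ≤ htfin.toFinset.card := Finset.card_image_le
      _ = Fintype.card ↥t := by rw [Set.Finite.card_toFinset]
      _ ≤ S.card := htcard
  have hKi : ∀ k ∈ K, k ≠ i := by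
    intro k hk
    have := (Finset.mem_sdiff.mp hk).2
    exact fun h => this (h ▸ Finset.mem_insert_self i S)
  have hKer : ∃ c', KerProp S (restr ω S D) c' := by
    refine ⟨c, hc0, hsupp, fun k => ?_⟩
    by_cases hk : k ∈ D
    · calc ∑ j, c j * restr ω S D k j = ∑ j, c j * bmat n ω k j := by
            refine Finset.sum_congr rfl fun j _ => ?_
            by_cases hj : j ∈ S
            · rw [restr, if_pos ⟨hk, hj⟩, bmat_eq]
            · rw [hsupp j hj]; ring
        _ = 0 := hrows k (hKi k (hDK hk))
    · refine Finset.sum_eq_zero fun j _ => ?_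
      rw [restr, if_neg (fun hc => hk hc.1), mul_zero]
  refine ⟨S, D, hScard, hDcard, ?_⟩
  obtain ⟨hcv0, hcvsupp, hcvrows⟩ := cvec_spec hKer
  set cv := cvec S (restr ω S D) with hcv
  rw [mem_Ev_iff]
  refine ⟨hcv0, fun k hk => ?_⟩
  -- reduce to sums over the subtype
  have hsum : ∀ m : Fin n, ∑ j, cv j * ent ω m j = ∑ j : ↥S, cv j * ρ m j := by
    intro m
    rw [Finset.sum_coe_sort S (fun j => cv j * ent ω m j)]
    symm
    refine Finset.sum_subset (Finset.subset_univ S) fun j _ hj => ?_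
    rw [hcvsupp j hj, zero_mul]
  have hdotD : ∀ m ∈ D, ∑ j : ↥S, cv j * ρ m j = 0 := by
    intro m hm
    have h0 := hcvrows m
    have : ∑ j, cv j * restr ω S D m j = ∑ j, cv j * ent ω m j := by
      refine Finset.sum_congr rfl fun j _ => ?_
      by_cases hj : j ∈ S
      · rw [restr, if_pos ⟨hm, hj⟩]
      · rw [hcvsupp j hj]; ring
    rw [this] at h0
    rw [← hsum m]
    exact h0
  -- the linear functional vanishes on the span of t = span of ρ '' K
  have hvanish : ∀ v ∈ Submodule.span ℝ (ρ '' (K : Set (Fin n))),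
      ∑ j : ↥S, cv j * v j = 0 := by
    intro v hv
    rw [← hspan] at hv
    induction hv using Submodule.span_induction with
    | mem x hx =>
        have hxt := hx
        have hfx := hfspec x hxt
        have hfD : f x ∈ D := by
          rw [hD, Finset.mem_image]
          exact ⟨x, (Set.Finite.mem_toFinset htfin).mpr hxt, rfl⟩
        rw [← hfx.2]
        exact hdotD (f x) hfD
    | zero => simp
    | add x y _ _ hx hy =>
        simp only [Pi.add_apply, mul_add, Finset.sum_add_distrib, hx, hy, add_zero]
    | smul a x _ hx =>
        simp only [Pi.smul_apply, smul_eq_mul]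
        calc ∑ j : ↥S, cv j * (a * x j) = a * ∑ j : ↥S, cv j * x j := by
              rw [Finset.mul_sum]
              exact Finset.sum_congr rfl fun j _ => by ring
          _ = 0 := by rw [hx, mul_zero]
  have hkK : k ∈ K := by
    rw [hK, Finset.mem_sdiff]
    exact ⟨Finset.mem_univ k, fun h => hk (Finset.mem_union_left _ h)⟩
  rw [hsum k]
  exact hvanish (ρ k) (Submodule.subset_span ⟨k, hkK, rfl⟩)

lemma Fam_card (Nb : ℕ) :
    (((Finset.univ : Finset (Fin n)).powerset.filter fun S => S.card ≤ Nb).card)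
      ≤ (Nb + 1) * (n + 1) ^ Nb := by
  have hsub : ((Finset.univ : Finset (Fin n)).powerset.filter fun S => S.card ≤ Nb)
      ⊆ (Finset.range (Nb + 1)).biUnion
          fun s => Finset.powersetCard s (Finset.univ : Finset (Fin n)) := by
    intro S hS
    rw [Finset.mem_filter] at hS
    rw [Finset.mem_biUnion]
    exact ⟨S.card, Finset.mem_range.mpr (Nat.lt_succ_of_le hS.2),
      Finset.mem_powersetCard.mpr ⟨Finset.subset_univ S, rfl⟩⟩
  calc ((Finset.univ : Finset (Fin n)).powerset.filter fun S => S.card ≤ Nb).card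
      ≤ ((Finset.range (Nb + 1)).biUnion
          fun s => Finset.powersetCard s (Finset.univ : Finset (Fin n))).card :=
        Finset.card_le_card hsub
    _ ≤ ∑ s ∈ Finset.range (Nb+1),
          (Finset.powersetCard s (Finset.univ : Finset (Fin n))).card :=
        Finset.card_biUnion_le
    _ ≤ ∑ _s ∈ Finset.range (Nb+1), (n+1)^Nb := by
        refine Finset.sum_le_sum fun s hs => ?_
        rw [Finset.card_powersetCard, Finset.card_univ, Fintype.card_fin]
        calc n.choose s ≤ n ^ s := Nat.choose_le_pow n s
          _ ≤ (n+1)^s := Nat.pow_le_pow_left (Nat.le_succ n) s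
          _ ≤ (n+1)^Nb := Nat.pow_le_pow_right (Nat.succ_le_succ (Nat.zero_le n))
              (Nat.lt_succ_iff.mp (Finset.mem_range.mp hs))
    _ = (Nb+1) * (n+1)^Nb := by rw [Finset.sum_const, Finset.card_range, smul_eq_mul]

set_option maxHeartbeats 2000000 in
lemma prob_bound (n : ℕ) (N : ℝ) (Nb : ℕ)
    (hN : ∀ S : Finset (Fin n), (S.card : ℝ) < N → S.card ≤ Nb) :
    unifProb (fun ω : UpIdx n → Bool =>
        (bmat n ω).det ≠ 0 ∧ ∃ i, ¬ GoodRow (bmat n ω) N i)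
      ≤ (n : ℝ) * (((Nb:ℝ)+1) * ((n:ℝ)+1)^Nb)^2 * 2^(2*Nb+1) * (1/2:ℝ)^n := by
  set pred := fun ω : UpIdx n → Bool =>
    (bmat n ω).det ≠ 0 ∧ ∃ i, ¬ GoodRow (bmat n ω) N i with hpred
  set Fam : Finset (Finset (Fin n)) :=
    (Finset.univ : Finset (Fin n)).powerset.filter (fun S => S.card ≤ Nb) with hFam
  set Trip : Finset (Fin n × Finset (Fin n) × Finset (Fin n)) :=
    (Finset.univ : Finset (Fin n)) ×ˢ (Fam ×ˢ Fam) with hTrip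
  set e : ℕ := n - (2*Nb+1) with he
  -- Step 1 : the event is covered by the union of the `Ev`s
  have hcover : (Finset.univ.filter pred)
      ⊆ Trip.biUnion (fun t => Ev t.1 t.2.1 t.2.2) := by
    intro ω hω
    rw [Finset.mem_filter] at hω
    obtain ⟨-, -, i, hbad⟩ := hω
    obtain ⟨S, D, hScard, hDcard, hmem⟩ := reduction hbad
    have hSNb : S.card ≤ Nb := hN S hScard
    have hDNb : D.card ≤ Nb := le_trans hDcard hSNb
    refine Finset.mem_biUnion.mpr ⟨(i, S, D), ?_, hmem⟩
    rw [hTrip, Finset.mem_product, Finset.mem_product]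
    refine ⟨Finset.mem_univ i, ?_, ?_⟩ <;>
      · rw [hFam, Finset.mem_filter]
        exact ⟨Finset.mem_powerset.mpr (Finset.subset_univ _), by assumption⟩
  -- Step 2 : counting, in ℕ
  have hstep2 : (Finset.univ.filter pred).card * 2 ^ e
      ≤ Trip.card * Fintype.card (UpIdx n → Bool) := by
    calc (Finset.univ.filter pred).card * 2 ^ e
        ≤ (Trip.biUnion (fun t => Ev t.1 t.2.1 t.2.2)).card * 2 ^ e := by
          exact Nat.mul_le_mul_right _ (Finset.card_le_card hcover)
      _ ≤ (∑ t ∈ Trip, (Ev t.1 t.2.1 t.2.2).card) * 2 ^ e :=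
          Nat.mul_le_mul_right _ Finset.card_biUnion_le
      _ = ∑ t ∈ Trip, (Ev t.1 t.2.1 t.2.2).card * 2 ^ e := by rw [Finset.sum_mul]
      _ ≤ ∑ _t ∈ Trip, Fintype.card (UpIdx n → Bool) := by
          refine Finset.sum_le_sum fun t ht => ?_
          rw [hTrip, Finset.mem_product, Finset.mem_product] at ht
          obtain ⟨-, hS, hD⟩ := ht
          rw [hFam, Finset.mem_filter] at hS hD
          have hTcard : (insert t.1 t.2.1 ∪ t.2.2).card ≤ 2*Nb+1 := by
            calc (insert t.1 t.2.1 ∪ t.2.2).card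
                ≤ (insert t.1 t.2.1).card + t.2.2.card := Finset.card_union_le _ _
              _ ≤ (t.2.1.card + 1) + t.2.2.card :=
                  Nat.add_le_add_right (Finset.card_insert_le _ _) _
              _ ≤ (Nb + 1) + Nb := by
                  have := hS.2; have := hD.2; omega
              _ = 2*Nb+1 := by omega
          calc (Ev t.1 t.2.1 t.2.2).card * 2 ^ e
              ≤ (Ev t.1 t.2.1 t.2.2).card * 2 ^ (n - (insert t.1 t.2.1 ∪ t.2.2).card) := by
                refine Nat.mul_le_mul_left _ (Nat.pow_le_pow_right (by omega) ?_)
                omega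
            _ ≤ Fintype.card (UpIdx n → Bool) := counting t.1.pos t.1 t.2.1 t.2.2
      _ = Trip.card * Fintype.card (UpIdx n → Bool) := by
          rw [Finset.sum_const, smul_eq_mul]
  -- Step 3 : transfer to ℝ
  have hTripcard : (Trip.card : ℝ) ≤ (n:ℝ) * (((Nb:ℝ)+1) * ((n:ℝ)+1)^Nb)^2 := by
    have h1 : Trip.card = n * (Fam.card * Fam.card) := by
      rw [hTrip, Finset.card_product, Finset.card_product, Finset.card_univ, Fintype.card_fin]
    have h2 : (Fam.card : ℝ) ≤ ((Nb:ℝ)+1) * ((n:ℝ)+1)^Nb := by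
      have := Fam_card (n := n) Nb
      calc (Fam.card : ℝ) ≤ (((Nb+1) * (n+1)^Nb : ℕ) : ℝ) := by exact_mod_cast this
        _ = ((Nb:ℝ)+1) * ((n:ℝ)+1)^Nb := by push_cast; ring
    rw [h1]
    push_cast
    have hnn : (0:ℝ) ≤ (n:ℝ) := Nat.cast_nonneg n
    have hfnn : (0:ℝ) ≤ (Fam.card : ℝ) := Nat.cast_nonneg _
    calc (n:ℝ) * ((Fam.card:ℝ) * (Fam.card:ℝ))
        ≤ (n:ℝ) * ((((Nb:ℝ)+1) * ((n:ℝ)+1)^Nb) * (((Nb:ℝ)+1) * ((n:ℝ)+1)^Nb)) := by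
          refine mul_le_mul_of_nonneg_left ?_ hnn
          exact mul_le_mul h2 h2 hfnn (le_trans hfnn h2)
      _ = (n:ℝ) * (((Nb:ℝ)+1) * ((n:ℝ)+1)^Nb)^2 := by ring
  have hcardpos : (0:ℝ) < (Fintype.card (UpIdx n → Bool) : ℝ) := by
    exact_mod_cast Fintype.card_pos
  have hepow : (2:ℝ)^(n:ℕ) ≤ 2^e * 2^(2*Nb+1) := by
    rw [← pow_add]
    exact pow_le_pow_right₀ one_le_two (by omega)
  have hstep2R : ((Finset.univ.filter pred).card : ℝ) * 2 ^ e
      ≤ (Trip.card : ℝ) * (Fintype.card (UpIdx n → Bool) : ℝ) := by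
    exact_mod_cast hstep2
  have hfc2 : ((Finset.univ.filter pred).card : ℝ) * 2^(n:ℕ)
      ≤ ((n : ℝ) * (((Nb:ℝ)+1) * ((n:ℝ)+1)^Nb)^2 * 2^(2*Nb+1))
          * (Fintype.card (UpIdx n → Bool) : ℝ) := by
    calc ((Finset.univ.filter pred).card : ℝ) * 2^(n:ℕ)
        ≤ ((Finset.univ.filter pred).card : ℝ) * (2^e * 2^(2*Nb+1)) := by
          exact mul_le_mul_of_nonneg_left hepow (Nat.cast_nonneg _)
      _ = (((Finset.univ.filter pred).card : ℝ) * 2^e) * 2^(2*Nb+1) := by ring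
      _ ≤ ((Trip.card : ℝ) * (Fintype.card (UpIdx n → Bool) : ℝ)) * 2^(2*Nb+1) := by
          exact mul_le_mul_of_nonneg_right hstep2R (by positivity)
      _ ≤ (((n:ℝ) * (((Nb:ℝ)+1) * ((n:ℝ)+1)^Nb)^2) * (Fintype.card (UpIdx n → Bool) : ℝ))
            * 2^(2*Nb+1) := by
          exact mul_le_mul_of_nonneg_right
            (mul_le_mul_of_nonneg_right hTripcard hcardpos.le) (by positivity)
      _ = ((n : ℝ) * (((Nb:ℝ)+1) * ((n:ℝ)+1)^Nb)^2 * 2^(2*Nb+1))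
            * (Fintype.card (UpIdx n → Bool) : ℝ) := by ring
  have h2n : (0:ℝ) < 2^(n:ℕ) := by positivity
  have hfinal : ((Finset.univ.filter pred).card : ℝ)
      ≤ ((n : ℝ) * (((Nb:ℝ)+1) * ((n:ℝ)+1)^Nb)^2 * 2^(2*Nb+1) * (1/2:ℝ)^n)
          * (Fintype.card (UpIdx n → Bool) : ℝ) := by
    calc ((Finset.univ.filter pred).card : ℝ)
        = (((Finset.univ.filter pred).card : ℝ) * 2^(n:ℕ)) / 2^(n:ℕ) := by
          field_simp
      _ ≤ (((n : ℝ) * (((Nb:ℝ)+1) * ((n:ℝ)+1)^Nb)^2 * 2^(2*Nb+1))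
            * (Fintype.card (UpIdx n → Bool) : ℝ)) / 2^(n:ℕ) := by
          exact div_le_div_of_nonneg_right hfc2 h2n.le |>.trans_eq rfl
      _ = ((n : ℝ) * (((Nb:ℝ)+1) * ((n:ℝ)+1)^Nb)^2 * 2^(2*Nb+1) * (1/2:ℝ)^n)
            * (Fintype.card (UpIdx n → Bool) : ℝ) := by
          rw [div_pow, one_pow]
          ring
  unfold unifProb
  rw [div_le_iff₀ hcardpos]
  refine le_trans (le_of_eq ?_) hfinal
  congr!

open Filter Asymptotics in
lemma tendsto_aux {δ : ℝ} (hδ1 : 0 < δ) (hδ2 : δ < 1) {L : ℝ} (hL : 0 < L) :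
    Filter.Tendsto (fun x : ℝ => (4*x^(1-δ)+4) * Real.log (x+2) - x*L)
      Filter.atTop Filter.atBot := by
  have h1 : (fun x : ℝ => Real.log (x+2)) =o[atTop] (fun x : ℝ => (x+2)^δ) :=
    (isLittleO_log_rpow_atTop hδ1).comp_tendsto
      (tendsto_atTop_add_const_right _ 2 tendsto_id)
  have h2 : (fun x : ℝ => (x+2)^δ) =O[atTop] (fun x : ℝ => x^δ) := by
    rw [Asymptotics.isBigO_iff]
    refine ⟨2^δ, Filter.eventually_atTop.mpr ⟨2, fun x hx => ?_⟩⟩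
    have hx0 : (0:ℝ) ≤ x := by linarith
    have h22 : x + 2 ≤ 2*x := by linarith
    rw [Real.norm_eq_abs, Real.norm_eq_abs, abs_of_nonneg (Real.rpow_nonneg (by linarith) δ),
      abs_of_nonneg (Real.rpow_nonneg hx0 δ)]
    calc (x+2)^δ ≤ (2*x)^δ := Real.rpow_le_rpow (by linarith) h22 hδ1.le
      _ = 2^δ * x^δ := Real.mul_rpow (by norm_num) hx0
  have h3 : (fun x : ℝ => Real.log (x+2)) =o[atTop] (fun x : ℝ => x^δ) :=
    h1.trans_isBigO h2
  have h4 : (fun x : ℝ => 4*x^(1-δ)+4) =O[atTop] (fun x : ℝ => x^(1-δ)) := by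
    rw [Asymptotics.isBigO_iff]
    refine ⟨8, Filter.eventually_atTop.mpr ⟨1, fun x hx => ?_⟩⟩
    have h1x : (1:ℝ) ≤ x^(1-δ) := by
      have h := Real.rpow_le_rpow_of_exponent_le hx (show (0:ℝ) ≤ 1-δ by linarith)
      rwa [Real.rpow_zero] at h
    rw [Real.norm_eq_abs, Real.norm_eq_abs, abs_of_nonneg (by linarith),
      abs_of_nonneg (by linarith : (0:ℝ) ≤ x^(1-δ))]
    linarith
  have h5 : (fun x : ℝ => (4*x^(1-δ)+4) * Real.log (x+2))
      =o[atTop] (fun x : ℝ => x^(1-δ) * x^δ) := h4.mul_isLittleO h3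
  have heq : (fun x : ℝ => x^(1-δ) * x^δ) =ᶠ[atTop] (fun x : ℝ => x) := by
    filter_upwards [Filter.eventually_gt_atTop 0] with x hx
    rw [← Real.rpow_add hx]
    norm_num
  have h7 : (fun x : ℝ => (4*x^(1-δ)+4) * Real.log (x+2)) =o[atTop] (fun x : ℝ => x) :=
    h5.congr' (Filter.EventuallyEq.refl _ _) heq
  have hbound := h7.def (half_pos hL)
  have hfinal : ∀ᶠ x : ℝ in atTop,
      (4*x^(1-δ)+4) * Real.log (x+2) - x*L ≤ -(L/2) * x := by
    filter_upwards [hbound, Filter.eventually_ge_atTop (0:ℝ)] with x hb hx0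
    rw [Real.norm_eq_abs, Real.norm_eq_abs, abs_of_nonneg hx0] at hb
    have := le_abs_self ((4*x^(1-δ)+4) * Real.log (x+2))
    linarith
  have htend : Filter.Tendsto (fun x : ℝ => -(L/2) * x) atTop atBot := by
    have h := Filter.Tendsto.const_mul_atTop (half_pos hL) (tendsto_id (α := ℝ) (x := atTop))
    have := tendsto_neg_atTop_atBot.comp h
    refine this.congr fun x => ?_
    simp [Function.comp, neg_mul]
  exact Filter.tendsto_atBot_mono' atTop hfinal htend

noncomputable def Nnn (ε : ℝ) (n : ℕ) : ℕ := ⌊(n:ℝ)^((1:ℝ)-ε)⌋₊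

lemma bounded_aux (ε : ℝ) (hε : 0 < ε) :
    ∃ C : ℝ, ∀ n : ℕ, ((n:ℝ)+2)^(4*Nnn ε n+4) * (3/4:ℝ)^n ≤ C := by
  set δ := min ε (1/2 : ℝ) with hδ
  have hδ1 : 0 < δ := lt_min hε (by norm_num)
  have hδε : δ ≤ ε := min_le_left _ _
  have hδhalf : δ ≤ 1/2 := min_le_right _ _
  set L := Real.log (4/3 : ℝ) with hLdef
  have hL : 0 < L := Real.log_pos (by norm_num)
  set H := fun n : ℕ => ((n:ℝ)+2)^(4*Nnn ε n+4) * (3/4:ℝ)^n with hH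
  set a := fun n : ℕ => ((4*Nnn ε n+4 : ℕ) : ℝ) * Real.log ((n:ℝ)+2)
      + (n:ℝ) * Real.log (3/4 : ℝ) with ha
  have hHeq : ∀ n, H n = Real.exp (a n) := by
    intro n
    have h2pos : (0:ℝ) < (n:ℝ)+2 := by positivity
    have h34 : (0:ℝ) < (3/4:ℝ)^n := by positivity
    simp only [hH, ha]
    rw [Real.exp_add]
    congr 1
    · rw [← Real.log_pow, Real.exp_log (by positivity)]
    · rw [← Real.log_pow, Real.exp_log h34]
  have hlog34 : Real.log (3/4 : ℝ) = -L := by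
    rw [hLdef, ← Real.log_inv]
    norm_num
  have hcomp : Filter.Tendsto (fun n : ℕ => (4*((n:ℝ))^(1-δ)+4) * Real.log ((n:ℝ)+2)
      - (n:ℝ)*L) Filter.atTop Filter.atBot :=
    (tendsto_aux hδ1 (lt_of_le_of_lt hδhalf (by norm_num)) hL).comp tendsto_natCast_atTop_atTop
  have hale : ∀ᶠ n : ℕ in Filter.atTop,
      a n ≤ (4*((n:ℝ))^(1-δ)+4) * Real.log ((n:ℝ)+2) - (n:ℝ)*L := by
    filter_upwards [Filter.eventually_ge_atTop 1] with n hn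
    have hn1 : (1:ℝ) ≤ (n:ℝ) := by exact_mod_cast hn
    have hNle : ((Nnn ε n : ℕ):ℝ) ≤ (n:ℝ)^(1-δ) := by
      calc ((Nnn ε n : ℕ):ℝ) ≤ (n:ℝ)^((1:ℝ)-ε) := Nat.floor_le (Real.rpow_nonneg (by linarith) _)
        _ ≤ (n:ℝ)^(1-δ) := Real.rpow_le_rpow_of_exponent_le hn1 (by linarith)
    have hlognn : (0:ℝ) ≤ Real.log ((n:ℝ)+2) := Real.log_nonneg (by linarith)
    simp only [ha, hlog34, mul_neg]
    have hcoef : ((4*Nnn ε n+4 : ℕ) : ℝ) ≤ 4*((n:ℝ))^(1-δ)+4 := by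
      push_cast
      linarith
    have := mul_le_mul_of_nonneg_right hcoef hlognn
    linarith
  have haT : Filter.Tendsto a Filter.atTop Filter.atBot :=
    Filter.tendsto_atBot_mono' _ hale hcomp
  have hH0 : Filter.Tendsto H Filter.atTop (nhds 0) :=
    (Real.tendsto_exp_atBot.comp haT).congr fun n => (hHeq n).symm
  have hev : ∀ᶠ n : ℕ in Filter.atTop, H n < 1 := hH0.eventually (gt_mem_nhds one_pos)
  obtain ⟨n₀, hn₀⟩ := Filter.eventually_atTop.mp hev
  refine ⟨1 + ∑ k ∈ Finset.range n₀, |H k|, fun n => ?_⟩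
  show H n ≤ 1 + ∑ k ∈ Finset.range n₀, |H k|
  have hsumnn : (0:ℝ) ≤ ∑ k ∈ Finset.range n₀, |H k| :=
    Finset.sum_nonneg fun k _ => abs_nonneg _
  rcases le_or_gt n₀ n with h | h
  · linarith [hn₀ n h]
  · have h1 : H n ≤ |H n| := le_abs_self _
    have h2 : |H n| ≤ ∑ k ∈ Finset.range n₀, |H k| :=
      Finset.single_le_sum (fun k _ => abs_nonneg (H k)) (Finset.mem_range.mpr h)
    linarith

lemma pow_bound (n Nb : ℕ) (hNb : Nb ≤ n+1) :
    (n : ℝ) * (((Nb:ℝ)+1) * ((n:ℝ)+1)^Nb)^2 * 2^(2*Nb+1) ≤ ((n:ℝ)+2)^(4*Nb+4) := by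
  have hA : (n:ℝ) ≤ (n:ℝ)+2 := by linarith
  have hB : ((Nb:ℝ)+1) * ((n:ℝ)+1)^Nb ≤ ((n:ℝ)+2)^(Nb+1) := by
    have h1 : ((Nb:ℝ)+1) ≤ (n:ℝ)+2 := by
      have : (Nb:ℝ) ≤ (n:ℝ)+1 := by exact_mod_cast hNb
      linarith
    have h2 : ((n:ℝ)+1)^Nb ≤ ((n:ℝ)+2)^Nb := pow_le_pow_left₀ (by positivity) (by linarith) Nb
    calc ((Nb:ℝ)+1) * ((n:ℝ)+1)^Nb ≤ ((n:ℝ)+2) * ((n:ℝ)+2)^Nb :=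
          mul_le_mul h1 h2 (by positivity) (by linarith)
      _ = ((n:ℝ)+2)^(Nb+1) := by rw [pow_succ]; ring
  have hC2 : (2:ℝ)^(2*Nb+1) ≤ ((n:ℝ)+2)^(2*Nb+1) :=
    pow_le_pow_left₀ (by norm_num) (by linarith [Nat.cast_nonneg (α := ℝ) n]) _
  calc (n : ℝ) * (((Nb:ℝ)+1) * ((n:ℝ)+1)^Nb)^2 * 2^(2*Nb+1)
      ≤ (((n:ℝ)+2) * (((n:ℝ)+2)^(Nb+1))^2) * ((n:ℝ)+2)^(2*Nb+1) := by
        refine mul_le_mul ?_ hC2 (by positivity) (by positivity)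
        exact mul_le_mul hA (pow_le_pow_left₀ (by positivity) hB 2) (by positivity) (by linarith)
    _ = ((n:ℝ)+2)^(4*Nb+4) := by
        rw [← pow_mul, ← pow_succ', ← pow_add]
        congr 1
        omega

end NSI

/-- The probability that a random symmetric Bernoulli matrix is nonsingular and imperfect
(some row is bad, w.r.t. `N = n^{1-ε}`) is `O((2/3)^n)`, with implied constant depending
only on `ε`. -/
theorem nonsingular_imperfect_prob (ε : ℝ) (hε : 0 < ε) :
    ∃ C : ℝ, ∀ n : ℕ,
      unifProb (fun ω : UpIdx n → Bool =>
          (bmat n ω).det ≠ 0 ∧ ∃ i, ¬ GoodRow (bmat n ω) ((n : ℝ) ^ (1 - ε)) i)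
        ≤ C * (2 / 3 : ℝ) ^ n := by
  obtain ⟨C, hC⟩ := NSI.bounded_aux ε hε
  refine ⟨C, fun n => ?_⟩
  have hN : ∀ S : Finset (Fin n), (S.card : ℝ) < (n:ℝ)^((1:ℝ)-ε) → S.card ≤ NSI.Nnn ε n :=
    fun S h => Nat.le_floor h.le
  refine le_trans (NSI.prob_bound n _ (NSI.Nnn ε n) hN) ?_
  set Nb := NSI.Nnn ε n with hNbdef
  have hNb : Nb ≤ n+1 := by
    have hle : (n:ℝ)^((1:ℝ)-ε) ≤ (((n+1:ℕ)):ℝ) := by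
      push_cast
      rcases Nat.eq_zero_or_pos n with h0 | hpos
      · subst h0
        simp only [Nat.cast_zero]
        calc (0:ℝ)^((1:ℝ)-ε) ≤ 1 := Real.zero_rpow_le_one _
          _ ≤ 0+1 := by norm_num
      · have hn1 : (1:ℝ) ≤ (n:ℝ) := by exact_mod_cast hpos
        calc (n:ℝ)^((1:ℝ)-ε) ≤ (n:ℝ)^(1:ℝ) :=
              Real.rpow_le_rpow_of_exponent_le hn1 (by linarith)
          _ = (n:ℝ) := Real.rpow_one _
          _ ≤ (n:ℝ)+1 := by linarith
    calc Nb ≤ ⌊(((n+1:ℕ)):ℝ)⌋₊ := Nat.floor_mono hle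
      _ = n+1 := Nat.floor_natCast _
  calc (n : ℝ) * (((Nb:ℝ)+1) * ((n:ℝ)+1)^Nb)^2 * 2^(2*Nb+1) * (1/2:ℝ)^n
      ≤ ((n:ℝ)+2)^(4*Nb+4) * (1/2:ℝ)^n :=
        mul_le_mul_of_nonneg_right (NSI.pow_bound n Nb hNb) (by positivity)
    _ = (((n:ℝ)+2)^(4*Nb+4) * (3/4:ℝ)^n) * (2/3:ℝ)^n := by
        rw [mul_assoc, ← mul_pow]
        norm_num
    _ ≤ C * (2/3:ℝ)^n :=
        mul_le_mul_of_nonneg_right (hC n) (by positivity)
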